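/- Let $a, b \in \mathbb{R}^n$ be nonzero, let $T \subseteq \mathbb{R}^n$ be a cone, and suppose there exist $y, z \in T$ with $\langle a, y \rangle < 0 < \langle a, z \rangle$. Then there exists $\epsilon > 0$ such that for every nonzero $b \in \mathbb{R}^n$ with $|b - a| < \epsilon$, we have $T + \ker(\langle b, \cdot \rangle) = \mathbb{R}^n$, where $\ker(\langle b, \cdot \rangle) = \{x \in \mathbb{R}^n : \langle b, x \rangle = 0\}$. -/

import Mathlib

open scoped Pointwise

/-- If a cone `T` contains points strictly on both sides of the hyperplane
`ker⟨a,·⟩` (with `a ≠ 0`), then for every nonzero `b` close enough to `a` we also have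
`T + ker⟨b,·⟩ = ℝ^n`. -/
theorem stmt9 (n : ℕ) (a : EuclideanSpace ℝ (Fin n)) (ha : a ≠ 0)
    (T : Set (EuclideanSpace ℝ (Fin n)))
    (h0 : (0 : EuclideanSpace ℝ (Fin n)) ∈ T)
    (hcone : ∀ t ∈ T, ∀ lam : ℝ, 0 ≤ lam → lam • t ∈ T)
    (y z : EuclideanSpace ℝ (Fin n)) (hy : y ∈ T) (hz : z ∈ T)
    (hya : (inner ℝ a y : ℝ) < 0) (hza : (0 : ℝ) < inner ℝ a z) :
    ∃ ε > (0 : ℝ), ∀ b : EuclideanSpace ℝ (Fin n), b ≠ 0 → ‖b - a‖ < ε →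
      T + {x : EuclideanSpace ℝ (Fin n) | (inner ℝ b x : ℝ) = 0} = Set.univ := by
  have hy0 : y ≠ 0 := by rintro rfl; simp at hya
  have hz0 : z ≠ 0 := by rintro rfl; simp at hza
  have hny : (0:ℝ) < ‖y‖ := norm_pos_iff.mpr hy0
  have hnz : (0:ℝ) < ‖z‖ := norm_pos_iff.mpr hz0
  refine ⟨min (-(inner ℝ a y : ℝ)/‖y‖) ((inner ℝ a z : ℝ)/‖z‖),
    lt_min (div_pos (by linarith) hny) (div_pos hza hnz), ?_⟩
  intro b hb hba
  have hby : (inner ℝ b y : ℝ) < 0 := by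
    have h1 : |(inner ℝ (b - a) y : ℝ)| ≤ ‖b - a‖ * ‖y‖ := abs_real_inner_le_norm _ _
    have h2 : ‖b - a‖ * ‖y‖ < (-(inner ℝ a y : ℝ)/‖y‖) * ‖y‖ := by
      apply mul_lt_mul_of_pos_right _ hny
      exact lt_of_lt_of_le hba (min_le_left _ _)
    have h3 : (-(inner ℝ a y : ℝ)/‖y‖) * ‖y‖ = -(inner ℝ a y : ℝ) := by
      field_simp
    have h4 : (inner ℝ (b - a) y : ℝ) = inner ℝ b y - inner ℝ a y := inner_sub_left _ _ _
    have := abs_lt.mp (lt_of_le_of_lt h1 (h3 ▸ h2))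
    linarith [this.2, h4 ▸ this.2]
  have hbz : (0:ℝ) < (inner ℝ b z : ℝ) := by
    have h1 : |(inner ℝ (b - a) z : ℝ)| ≤ ‖b - a‖ * ‖z‖ := abs_real_inner_le_norm _ _
    have h2 : ‖b - a‖ * ‖z‖ < ((inner ℝ a z : ℝ)/‖z‖) * ‖z‖ := by
      apply mul_lt_mul_of_pos_right _ hnz
      exact lt_of_lt_of_le hba (min_le_right _ _)
    have h3 : ((inner ℝ a z : ℝ)/‖z‖) * ‖z‖ = (inner ℝ a z : ℝ) := by
      field_simp
    have h4 : (inner ℝ (b - a) z : ℝ) = inner ℝ b z - inner ℝ a z := inner_sub_left _ _ _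
    have := abs_lt.mp (lt_of_le_of_lt h1 (h3 ▸ h2))
    linarith [this.1, h4 ▸ this.1]
  ext x
  simp only [Set.mem_univ, iff_true]
  set c : ℝ := inner ℝ b x with hc
  rcases le_or_gt 0 c with hcp | hcn
  · have ht : (c / inner ℝ b z) • z ∈ T := hcone z hz _ (div_nonneg hcp hbz.le)
    have hk : x - (c / inner ℝ b z) • z ∈
        {x : EuclideanSpace ℝ (Fin n) | (inner ℝ b x : ℝ) = 0} := by
      simp only [Set.mem_setOf_eq]
      rw [inner_sub_right, real_inner_smul_right, div_mul_cancel₀ _ hbz.ne', ← hc, sub_self]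
    have := Set.add_mem_add ht hk
    simpa using this
  · have ht : (c / inner ℝ b y) • y ∈ T := hcone y hy _
      (div_nonneg_iff.mpr (Or.inr ⟨hcn.le, hby.le⟩))
    have hk : x - (c / inner ℝ b y) • y ∈
        {x : EuclideanSpace ℝ (Fin n) | (inner ℝ b x : ℝ) = 0} := by
      simp only [Set.mem_setOf_eq]
      rw [inner_sub_right, real_inner_smul_right, div_mul_cancel₀ _ hby.ne, ← hc, sub_self]
    have := Set.add_mem_add ht hk
    simpa using this
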